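/- Let G and H be locally compact Hausdorff groups and let T : C_0(G)^⊥ → C_0(H)^⊥ be an isometric algebra isomorphism (not necessarily weak-star continuous). Then for each x ∈ H, the right-point multiplier R_x : C_0(G)^⊥ → C_0(G)^⊥ defined by R_x(m) = T^{-1}(T(m)·δ_x) is weak-star continuous. -/

import Mathlib

open scoped BoundedContinuousFunction
open Filter Topology

set_option synthInstance.maxHeartbeats 1000000
set_option maxHeartbeats 1000000

namespace LucPaper

variable {G : Type*} [Group G] [TopologicalSpace G] [IsTopologicalGroup G]

/-- Left translation of a bounded continuous function: `lTrans g f x = f (g * x)`. -/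
noncomputable def lTrans (g : G) (f : G →ᵇ ℂ) : G →ᵇ ℂ :=
  f.compContinuous ⟨fun x => g * x, continuous_const.mul continuous_id⟩

@[simp] lemma lTrans_apply (g : G) (f : G →ᵇ ℂ) (x : G) : lTrans g f x = f (g * x) := rfl

lemma lTrans_mul (g : G) (f h : G →ᵇ ℂ) : lTrans g (f * h) = lTrans g f * lTrans g h := by
  ext x; simp [lTrans]

lemma lTrans_add (g : G) (f h : G →ᵇ ℂ) : lTrans g (f + h) = lTrans g f + lTrans g h := by
  ext x; simp [lTrans]

lemma lTrans_smul (g : G) (c : ℂ) (f : G →ᵇ ℂ) : lTrans g (c • f) = c • lTrans g f := by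
  ext x; simp [lTrans]

lemma lTrans_sub (g : G) (f h : G →ᵇ ℂ) : lTrans g (f - h) = lTrans g f - lTrans g h := by
  ext x; simp [lTrans]

lemma lTrans_lTrans (x g : G) (f : G →ᵇ ℂ) : lTrans x (lTrans g f) = lTrans (g * x) f := by
  ext y; simp [mul_assoc]

lemma norm_lTrans_le (g : G) (f : G →ᵇ ℂ) : ‖lTrans g f‖ ≤ ‖f‖ :=
  f.norm_compContinuous_le _

lemma lTrans_algebraMap (g : G) (c : ℂ) :
    lTrans g (algebraMap ℂ (G →ᵇ ℂ) c) = algebraMap ℂ (G →ᵇ ℂ) c := by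
  ext x; simp [lTrans]

lemma algebraMap_mem_luc (c : ℂ) :
    Continuous fun g : G => lTrans g (algebraMap ℂ (G →ᵇ ℂ) c) := by
  have e : (fun g : G => lTrans g (algebraMap ℂ (G →ᵇ ℂ) c)) =
      fun _ : G => algebraMap ℂ (G →ᵇ ℂ) c :=
    funext fun g => lTrans_algebraMap g c
  rw [e]
  exact continuous_const

/-- The `C*`-algebra `LUC(G)` of bounded left uniformly continuous complex functions on `G`,
realized as a subalgebra of the bounded continuous functions. -/
noncomputable def LUC (G : Type*) [Group G] [TopologicalSpace G] [IsTopologicalGroup G] :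
    Subalgebra ℂ (G →ᵇ ℂ) where
  carrier := {f | Continuous fun g : G => lTrans g f}
  mul_mem' {f h} hf hh := by
    have hf' : Continuous fun g : G => lTrans g f := hf
    have hh' : Continuous fun g : G => lTrans g h := hh
    have e : (fun g : G => lTrans g (f * h)) = fun g => lTrans g f * lTrans g h :=
      funext fun g => lTrans_mul g f h
    show Continuous fun g : G => lTrans g (f * h)
    rw [e]
    exact hf'.mul hh'
  add_mem' {f h} hf hh := by
    have hf' : Continuous fun g : G => lTrans g f := hf
    have hh' : Continuous fun g : G => lTrans g h := hh
    have e : (fun g : G => lTrans g (f + h)) = fun g => lTrans g f + lTrans g h :=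
      funext fun g => lTrans_add g f h
    show Continuous fun g : G => lTrans g (f + h)
    rw [e]
    exact hf'.add hh'
  algebraMap_mem' c := algebraMap_mem_luc c


section Instances
set_option synthInstance.maxHeartbeats 1000000 in
noncomputable instance instLUCNormedAddCommGroup (G : Type*) [Group G] [TopologicalSpace G]
    [IsTopologicalGroup G] : NormedAddCommGroup (LUC G) := inferInstance

set_option synthInstance.maxHeartbeats 1000000 in
noncomputable instance instLUCNormedSpace (G : Type*) [Group G] [TopologicalSpace G]
    [IsTopologicalGroup G] : NormedSpace ℂ (LUC G) := inferInstance

set_option synthInstance.maxHeartbeats 1000000 in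
noncomputable instance instLUCNormedRing (G : Type*) [Group G] [TopologicalSpace G]
    [IsTopologicalGroup G] : NormedRing (LUC G) := inferInstance
end Instances

/-- `LUC(G)^*`, the dual Banach space of `LUC(G)`. -/
noncomputable abbrev Ld (G : Type*) [Group G] [TopologicalSpace G] [IsTopologicalGroup G] :=
  StrongDual ℂ (LUC G)

/-- Left translation as a map `LUC G → LUC G`. -/
noncomputable def lTransL (g : G) (f : LUC G) : LUC G :=
  ⟨lTrans g (f : G →ᵇ ℂ), by
    have hf : Continuous fun h : G => lTrans h (f : G →ᵇ ℂ) := f.2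
    have e : (fun h : G => lTrans h (lTrans g (f : G →ᵇ ℂ))) =
        (fun k : G => lTrans k (f : G →ᵇ ℂ)) ∘ fun h : G => g * h := by
      funext h
      exact lTrans_lTrans h g (f : G →ᵇ ℂ)
    show Continuous fun h : G => lTrans h (lTrans g (f : G →ᵇ ℂ))
    rw [e]
    exact hf.comp (continuous_const.mul continuous_id)⟩

@[simp] lemma lTransL_coe (g : G) (f : LUC G) :
    (lTransL g f : G →ᵇ ℂ) = lTrans g (f : G →ᵇ ℂ) := rfl

lemma continuous_lTransL (f : LUC G) : Continuous fun g : G => lTransL g f :=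
  Continuous.subtype_mk f.2 _

lemma norm_lTransL_le (g : G) (f : LUC G) : ‖lTransL g f‖ ≤ ‖f‖ :=
  norm_lTrans_le g (f : G →ᵇ ℂ)

lemma lTransL_add (g : G) (f h : LUC G) : lTransL g (f + h) = lTransL g f + lTransL g h :=
  Subtype.ext (lTrans_add g _ _)

lemma lTransL_smul (g : G) (c : ℂ) (f : LUC G) : lTransL g (c • f) = c • lTransL g f :=
  Subtype.ext (lTrans_smul g c _)

lemma lTransL_sub (g : G) (f h : LUC G) : lTransL g (f - h) = lTransL g f - lTransL g h :=
  Subtype.ext (lTrans_sub g _ _)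

lemma lTransL_mul (g : G) (f h : LUC G) : lTransL g (f * h) = lTransL g f * lTransL g h :=
  Subtype.ext (lTrans_mul g _ _)

lemma lTransL_lTransL (x g : G) (f : LUC G) : lTransL x (lTransL g f) = lTransL (g * x) f :=
  Subtype.ext (lTrans_lTrans x g _)

end LucPaper

namespace LucPaper
variable {G : Type*} [Group G] [TopologicalSpace G] [IsTopologicalGroup G]

/-- The function `n f : g ↦ ⟨n, l_g f⟩` as a bounded continuous function. -/
noncomputable def arensBCF (n : Ld G) (f : LUC G) : G →ᵇ ℂ :=
  BoundedContinuousFunction.ofNormedAddCommGroup (fun g : G => n (lTransL g f))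
    (n.continuous.comp (continuous_lTransL f)) (‖n‖ * ‖f‖)
    (fun g => le_trans (n.le_opNorm _)
      (mul_le_mul_of_nonneg_left (norm_lTransL_le g f) (norm_nonneg n)))

@[simp] lemma arensBCF_apply (n : Ld G) (f : LUC G) (g : G) :
    arensBCF n f g = n (lTransL g f) := rfl

lemma norm_arensBCF_le (n : Ld G) (f : LUC G) : ‖arensBCF n f‖ ≤ ‖n‖ * ‖f‖ :=
  BoundedContinuousFunction.norm_ofNormedAddCommGroup_le _
    (mul_nonneg (norm_nonneg n) (norm_nonneg f)) _

lemma arensBCF_sub (n : Ld G) (f h : LUC G) :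
    arensBCF n (f - h) = arensBCF n f - arensBCF n h := by
  ext g
  simp [lTransL_sub]

lemma arensBCF_add (n : Ld G) (f h : LUC G) :
    arensBCF n (f + h) = arensBCF n f + arensBCF n h := by
  ext g
  simp [lTransL_add]

lemma arensBCF_smul (n : Ld G) (c : ℂ) (f : LUC G) :
    arensBCF n (c • f) = c • arensBCF n f := by
  ext g
  simp [lTransL_smul]

lemma lipschitz_arensBCF (n : Ld G) :
    LipschitzWith ‖n‖₊ fun f : LUC G => arensBCF n f := by
  apply LipschitzWith.of_dist_le_mul
  intro f h
  rw [dist_eq_norm, dist_eq_norm, ← arensBCF_sub]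
  have : ‖f - h‖ = ‖(f - h : LUC G)‖ := rfl
  calc ‖arensBCF n (f - h)‖ ≤ ‖n‖ * ‖f - h‖ := norm_arensBCF_le n (f - h)
    _ = ‖n‖₊ * ‖f - h‖ := rfl

lemma lTrans_arensBCF (n : Ld G) (f : LUC G) (g : G) :
    lTrans g (arensBCF n f) = arensBCF n (lTransL g f) := by
  ext x
  simp only [lTrans_apply, arensBCF_apply]
  rw [lTransL_lTransL]

/-- The element `n f` of `LUC(G)`. -/
noncomputable def arensFn (n : Ld G) (f : LUC G) : LUC G :=
  ⟨arensBCF n f, by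
    have e : (fun g : G => lTrans g (arensBCF n f)) =
        (fun h : LUC G => arensBCF n h) ∘ fun g : G => lTransL g f :=
      funext fun g => lTrans_arensBCF n f g
    show Continuous fun g : G => lTrans g (arensBCF n f)
    rw [e]
    exact (lipschitz_arensBCF n).continuous.comp (continuous_lTransL f)⟩

@[simp] lemma arensFn_coe (n : Ld G) (f : LUC G) : (arensFn n f : G →ᵇ ℂ) = arensBCF n f := rfl

lemma norm_arensFn_le (n : Ld G) (f : LUC G) : ‖arensFn n f‖ ≤ ‖n‖ * ‖f‖ :=
  norm_arensBCF_le n f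

/-- The Arens-type product on `LUC(G)^*`: `⟨m · n, f⟩ = ⟨m, n f⟩`. -/
noncomputable def arens (m n : Ld G) : Ld G :=
  LinearMap.mkContinuous
    { toFun := fun f : LUC G => m (arensFn n f)
      map_add' := fun f h => by
        show m (arensFn n (f + h)) = m (arensFn n f) + m (arensFn n h)
        rw [show arensFn n (f + h) = arensFn n f + arensFn n h from
          Subtype.ext (arensBCF_add n f h), map_add]
      map_smul' := fun c f => by
        show m (arensFn n (c • f)) = c • m (arensFn n f)
        rw [show arensFn n (c • f) = c • arensFn n f from
          Subtype.ext (arensBCF_smul n c f), map_smul] }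
    (‖m‖ * ‖n‖)
    (fun f => by
      calc ‖m (arensFn n f)‖ ≤ ‖m‖ * ‖arensFn n f‖ := m.le_opNorm _
        _ ≤ ‖m‖ * (‖n‖ * ‖f‖) :=
            mul_le_mul_of_nonneg_left (norm_arensFn_le n f) (norm_nonneg m)
        _ = ‖m‖ * ‖n‖ * ‖f‖ := by ring)

@[simp] lemma arens_apply (m n : Ld G) (f : LUC G) : arens m n f = m (arensFn n f) := rfl

end LucPaper
namespace LucPaper
variable {G : Type*} [Group G] [TopologicalSpace G] [IsTopologicalGroup G]

/-- Evaluation at a point of `G`, as an element of `LUC(G)^*`. -/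
noncomputable def evalChar (g : G) : Ld G :=
  LinearMap.mkContinuous
    { toFun := fun f : LUC G => (f : G →ᵇ ℂ) g
      map_add' := fun f h => rfl
      map_smul' := fun c f => rfl }
    1 (fun f => by rw [one_mul]; exact (f : G →ᵇ ℂ).norm_coe_le_norm g)

@[simp] lemma evalChar_apply (g : G) (f : LUC G) : evalChar g f = (f : G →ᵇ ℂ) g := rfl

variable (G) in
/-- The `LUC`-compactification `G^{luc}` realized as the set of nonzero multiplicative
functionals in `LUC(G)^*`. -/
def gLuc : Set (Ld G) :=
  {m | m ≠ 0 ∧ ∀ f h : LUC G, m (f * h) = m f * m h}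

variable (G) in
/-- The corona `G^* = G^{luc} \ G` in `LUC(G)^*`. -/
def gStar : Set (Ld G) :=
  gLuc G \ Set.range (evalChar (G := G))

lemma evalChar_mem_gLuc (g : G) : evalChar g ∈ gLuc G := by
  constructor
  · intro h0
    have h1 : evalChar g (1 : LUC G) = 0 := by rw [h0]; rfl
    have h2 : evalChar g (1 : LUC G) = 1 := rfl
    rw [h2] at h1
    exact one_ne_zero h1
  · intro f h
    have : ((f * h : LUC G) : G →ᵇ ℂ) = (f : G →ᵇ ℂ) * (h : G →ᵇ ℂ) := rfl
    simp [this]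

end LucPaper
namespace LucPaper
variable {G : Type*} [Group G] [TopologicalSpace G] [IsTopologicalGroup G]

/-- Membership in `C_0(G)`: vanishing at infinity. -/
def IsC0 (f : G →ᵇ ℂ) : Prop := Tendsto (f : G → ℂ) (cocompact G) (𝓝 0)

variable (G) in
/-- The annihilator `C_0(G)^⊥` of `C_0(G)` in `LUC(G)^*`. -/
noncomputable def C0perp : Submodule ℂ (Ld G) where
  carrier := {m | ∀ f : LUC G, IsC0 (f : G →ᵇ ℂ) → m f = 0}
  add_mem' {m n} hm hn := fun f hf => by
    simp [hm f hf, hn f hf]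
  zero_mem' := fun f _ => rfl
  smul_mem' c m hm := fun f hf => by
    simp [hm f hf]

lemma isC0_lTrans {f : G →ᵇ ℂ} (hf : IsC0 f) (g : G) : IsC0 (lTrans g f) := by
  have h1 : Tendsto (⇑(Homeomorph.mulLeft g)) (cocompact G) (cocompact G) :=
    tendsto_map.mono_right (le_of_eq ((Homeomorph.mulLeft g).map_cocompact))
  have h1' : Tendsto (fun x : G => g * x) (cocompact G) (cocompact G) := h1
  exact hf.comp h1'

lemma isC0_rTransBCF {f : G →ᵇ ℂ} (hf : IsC0 f) (x : G) :
    IsC0 (f.compContinuous ⟨fun g : G => g * x, continuous_id.mul continuous_const⟩) := by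
  have h1 : Tendsto (⇑(Homeomorph.mulRight x)) (cocompact G) (cocompact G) :=
    tendsto_map.mono_right (le_of_eq ((Homeomorph.mulRight x).map_cocompact))
  have h1' : Tendsto (fun g : G => g * x) (cocompact G) (cocompact G) := h1
  exact hf.comp h1'

/-- `C_0(G)^⊥` is a left ideal for the Arens product: if `n ∈ C_0(G)^⊥` then `m · n ∈ C_0(G)^⊥`
for every `m`. -/
lemma arens_mem_C0perp_left (m : Ld G) {n : Ld G} (hn : n ∈ C0perp G) :
    arens m n ∈ C0perp G := by
  intro f hf
  have hz : arensFn n f = 0 := by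
    apply Subtype.ext
    ext g
    exact hn (lTransL g f) (isC0_lTrans hf g)
  rw [arens_apply, hz, map_zero]

/-- Multiplying an element of `C_0(G)^⊥` by a point evaluation on the right stays in
`C_0(G)^⊥`. -/
lemma arens_evalChar_mem_C0perp {m : Ld G} (hm : m ∈ C0perp G) (x : G) :
    arens m (evalChar x) ∈ C0perp G := by
  intro f hf
  rw [arens_apply]
  apply hm
  show IsC0 (arensBCF (evalChar x) f)
  have e : (arensBCF (evalChar x) f : G → ℂ) =
      ((f : G →ᵇ ℂ).compContinuous ⟨fun g : G => g * x, continuous_id.mul continuous_const⟩ :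
        G → ℂ) := by
    funext g
    rfl
  show Tendsto (arensBCF (evalChar x) f : G → ℂ) (cocompact G) (𝓝 0)
  rw [e]
  exact isC0_rTransBCF hf x

/-- The multiplication on `C_0(G)^⊥` induced by the Arens product. -/
noncomputable instance : Mul (C0perp G) :=
  ⟨fun m n => ⟨arens m.1 n.1, arens_mem_C0perp_left m.1 n.2⟩⟩

@[simp] lemma C0perp_mul_coe (m n : C0perp G) : ((m * n : C0perp G) : Ld G) = arens m.1 n.1 := rfl

end LucPaper
namespace LucPaper
variable {G : Type*} [Group G] [TopologicalSpace G] [IsTopologicalGroup G]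

section WeakStar

variable {H : Type*} [Group H] [TopologicalSpace H] [IsTopologicalGroup H]

/-- Weak-star continuity for a map `C_0(G)^⊥ → C_0(H)^⊥`, phrased via filters:
whenever a filter converges pointwise (weak-star) to `m`, the images converge pointwise
(weak-star) to the image of `m`. -/
def WStarContinuousC0 (T : C0perp G → C0perp H) : Prop :=
  ∀ (l : Filter (C0perp G)) (m : C0perp G),
    (∀ f : LUC G, Tendsto (fun n : C0perp G => (n : Ld G) f) l (𝓝 ((m : Ld G) f))) →
    ∀ f : LUC H, Tendsto (fun n : C0perp G => (T n : Ld H) f) l (𝓝 ((T m : Ld H) f))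

/-- Weak-star continuity for a map `LUC(G)^* → LUC(H)^*`, phrased via filters. -/
def WStarContinuousD (T : Ld G → Ld H) : Prop :=
  ∀ (l : Filter (Ld G)) (m : Ld G),
    (∀ f : LUC G, Tendsto (fun n : Ld G => n f) l (𝓝 (m f))) →
    ∀ f : LUC H, Tendsto (fun n : Ld G => T n f) l (𝓝 (T m f))

end WeakStar

section WeakDualSide

/-- `LUC(G)^*` equipped with its weak-star topology. -/
noncomputable abbrev LdW (G : Type*) [Group G] [TopologicalSpace G] [IsTopologicalGroup G] :=
  WeakDual ℂ (LUC G)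

variable (G) in
/-- The `LUC`-compactification `G^{luc}` as a subset of the weak-star dual. -/
def gLucW : Set (LdW G) :=
  {m | m ≠ 0 ∧ ∀ f h : LUC G, m (f * h) = m f * m h}

/-- Evaluation at a point of `G` as an element of the weak-star dual. -/
noncomputable def evalCharW (g : G) : LdW G :=
  StrongDual.toWeakDual (evalChar g)

variable (G) in
/-- The corona `G^* = G^{luc} \ G` inside the weak-star dual. -/
def gStarW : Set (LdW G) :=
  gLucW G \ Set.range (evalCharW (G := G))

/-- The Arens product transported to the weak-star dual. -/
noncomputable def arensW (m n : LdW G) : LdW G :=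
  StrongDual.toWeakDual
    (arens (WeakDual.toStrongDual m) (WeakDual.toStrongDual n))

lemma evalCharW_mem_gLucW (g : G) : evalCharW g ∈ gLucW G := by
  have h := evalChar_mem_gLuc (g := g)
  constructor
  · intro h0
    apply h.1
    have : WeakDual.toStrongDual (evalCharW g) = WeakDual.toStrongDual (0 : LdW G) := by
      rw [h0]
    simpa [evalCharW] using this
  · intro f k
    exact h.2 f k

end WeakDualSide

section FSpace

/-- `X` is an F-space: every bounded continuous real function `f` factors as `f = k·|f|`
with `k` bounded continuous. -/
def IsFSpace (X : Type*) [TopologicalSpace X] : Prop :=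
  ∀ f : X →ᵇ ℝ, ∃ k : X →ᵇ ℝ, ∀ x : X, f x = k x * |f x|

/-- A P-point: every `G_δ` set containing the point is a neighbourhood of the point. -/
def IsPPoint {X : Type*} [TopologicalSpace X] (p : X) : Prop :=
  ∀ s : Set X, p ∈ s → (∃ U : ℕ → Set X, (∀ n, IsOpen (U n)) ∧ s = ⋂ n, U n) → s ∈ 𝓝 p

end FSpace

end LucPaper



namespace LucPaper

section Statement19Aux

variable {G : Type*} [Group G] [TopologicalSpace G] [IsTopologicalGroup G]

lemma lTransL_arensFn (b : Ld G) (f : LUC G) (g : G) :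
    lTransL g (arensFn b f) = arensFn b (lTransL g f) :=
  Subtype.ext (lTrans_arensBCF b f g)

lemma arensFn_arens (a b : Ld G) (f : LUC G) :
    arensFn (arens a b) f = arensFn a (arensFn b f) := by
  apply Subtype.ext
  ext g
  show (arens a b) (lTransL g f) = a (lTransL g (arensFn b f))
  rw [arens_apply, lTransL_arensFn]

lemma arens_assoc (a b c : Ld G) :
    arens (arens a b) c = arens a (arens b c) := by
  ext f
  show (arens a b) (arensFn c f) = a (arensFn (arens b c) f)
  rw [arens_apply, arensFn_arens]

lemma C0perp_eq_zero_of_compact [CompactSpace G] (n : Ld G) (hn : n ∈ C0perp G) : n = 0 := by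
  ext v
  have hv : IsC0 (v : G →ᵇ ℂ) := by
    unfold IsC0
    rw [Filter.cocompact_eq_bot]
    exact tendsto_bot
  simpa using hn v hv

end Statement19Aux

open scoped Pointwise in
/-- Data of a directed family of compact sets exhausting all compacts, together with
"block base points" `b i` escaping to infinity, whose enlarged blocks are pairwise disjoint. -/
structure BlockData (G : Type u) [Group G] [TopologicalSpace G]
    (CCf : Set G → Set G) where
  ι : Type u
  KS : ι → Set G
  b : ι → G
  L : Filter ι
  Lne : L.NeBot
  KSc : ∀ i, IsCompact (KS i)
  tail : ∀ i₀ : ι, {i | KS i₀ ⊆ KS i} ∈ L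
  cov : ∀ K : Set G, IsCompact K → ∃ i, K ⊆ KS i
  esc : ∀ i, b i ∉ KS i
  disj : ∀ i j, i ≠ j → Disjoint (CCf (KS i) * {b i}) (CCf (KS j) * {b j})

section Blocks

open scoped Pointwise
open Set Cardinal

variable {G : Type u} [Group G] [TopologicalSpace G] [IsTopologicalGroup G]
  [T2Space G] [LocallyCompactSpace G]

lemma exists_blockData (hnc : ¬ CompactSpace G) {V : Set G} (hVc : IsCompact V)
    (hV1 : V ∈ 𝓝 (1 : G)) (CCf : Set G → Set G)
    (hCCf : ∀ K : Set G, IsCompact K → IsCompact (CCf K)) :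
    Nonempty (BlockData G CCf) := by
  classical
  set O := interior V with hO
  have hO1 : (1 : G) ∈ O := mem_interior_iff_mem_nhds.mpr hV1
  have hOopen : IsOpen O := isOpen_interior
  set Scov : Set Cardinal.{u} :=
    {c | ∃ A : Set G, (∀ g : G, ∃ a ∈ A, g ∈ a • O) ∧ #A = c} with hScov
  have hSne : Scov.Nonempty :=
    ⟨#(Set.univ : Set G), Set.univ, fun g => ⟨g, trivial, ⟨1, hO1, mul_one g⟩⟩, rfl⟩
  obtain ⟨A₀, hA₀cov, hA₀card⟩ := csInf_mem hSne
  set c0 := sInf Scov with hc0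
  have hmin : ∀ c ∈ Scov, c0 ≤ c := fun c hc => csInf_le' hc
  have hA₀inf : A₀.Infinite := by
    intro hfin
    apply hnc
    constructor
    have hsub : (Set.univ : Set G) ⊆ ⋃ a ∈ A₀, a • V := by
      intro g _
      obtain ⟨a, ha, hg⟩ := hA₀cov g
      exact Set.mem_biUnion ha (Set.smul_set_mono interior_subset hg)
    exact (hfin.isCompact_biUnion fun a _ => hVc.smul a).of_isClosed_subset isClosed_univ hsub
  haveI : Infinite ↥A₀ := hA₀inf.to_subtype
  have hℵ0 : ℵ₀ ≤ c0 := by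
    rw [← hA₀card]
    exact Cardinal.infinite_iff.mp ‹_›
  -- avoidance: fewer than `c0` compacts cannot cover `G`
  have havoid : ∀ 𝒞 : Set (Set G), #𝒞 < c0 → (∀ C ∈ 𝒞, IsCompact C) →
      ∃ g : G, ∀ C ∈ 𝒞, g ∉ C := by
    intro 𝒞 hcard hcpt
    by_contra hcon
    push_neg at hcon
    have hsel : ∀ C : ↥𝒞, ∃ t : Finset G, (C : Set G) ⊆ ⋃ a ∈ t, a • O := by
      rintro ⟨C, hC⟩
      obtain ⟨t, ht⟩ := (hcpt C hC).elim_finite_subcover (fun g : G => g • O)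
        (fun g => hOopen.smul g) (fun x _ => Set.mem_iUnion.mpr ⟨x, ⟨1, hO1, mul_one x⟩⟩)
      exact ⟨t, ht⟩
    choose t ht using hsel
    set A' : Set G := ⋃ C : ↥𝒞, (t C : Set G) with hA'
    have hA'cov : ∀ g : G, ∃ a ∈ A', g ∈ a • O := by
      intro g
      obtain ⟨C, hC𝒞, hgC⟩ := hcon g
      have hmem := ht ⟨C, hC𝒞⟩ hgC
      simp only [Set.mem_iUnion, exists_prop] at hmem
      obtain ⟨a, hat, hga⟩ := hmem
      exact ⟨a, Set.mem_iUnion.mpr ⟨⟨C, hC𝒞⟩, hat⟩, hga⟩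
    have hle : c0 ≤ #A' := hmin _ ⟨A', hA'cov, rfl⟩
    have hlt : #A' < c0 := by
      rcases lt_or_ge #↥𝒞 ℵ₀ with hfin | hinf
      · haveI : Finite ↥𝒞 := Cardinal.lt_aleph0_iff_finite.mp hfin
        have hfinA' : A'.Finite := Set.finite_iUnion fun C => (t C).finite_toSet
        exact lt_of_lt_of_le hfinA'.lt_aleph0 hℵ0
      · haveI : Nonempty ↥𝒞 := by
          rw [← Cardinal.mk_ne_zero_iff]
          intro h0
          rw [h0] at hinf
          exact Cardinal.aleph0_ne_zero (le_antisymm hinf zero_le)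
        calc #A' ≤ #↥𝒞 * ⨆ C : ↥𝒞, #(t C : Set G) := Cardinal.mk_iUnion_le _
          _ ≤ #↥𝒞 * ℵ₀ := by
              gcongr
              exact ciSup_le' fun C => ((t C).finite_toSet.lt_aleph0).le
          _ = #↥𝒞 := Cardinal.mul_eq_left hinf hinf Cardinal.aleph0_ne_zero
          _ < c0 := hcard
    exact absurd hle (not_le.mpr hlt)
  -- index type and family of compacts
  set ι := Finset ↥A₀ with hι
  set KS : ι → Set G := fun S => ⋃ a ∈ (S : Set ↥A₀), ((a : G) • V) with hKS
  have hKSc : ∀ S, IsCompact (KS S) := fun S =>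
    S.finite_toSet.isCompact_biUnion fun a _ => hVc.smul _
  have hKSmono : ∀ S T : ι, S ≤ T → KS S ⊆ KS T := fun S T hST =>
    Set.biUnion_subset_biUnion_left (Finset.coe_subset.mpr hST)
  have hKScov : ∀ K : Set G, IsCompact K → ∃ S : ι, K ⊆ KS S := by
    intro K hK
    obtain ⟨t, ht⟩ := hK.elim_finite_subcover (fun a : ↥A₀ => (a : G) • O)
      (fun a => hOopen.smul _)
      (by
        intro g _
        obtain ⟨a, ha, hg⟩ := hA₀cov g
        exact Set.mem_iUnion.mpr ⟨⟨a, ha⟩, hg⟩)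
    refine ⟨t, ht.trans ?_⟩
    intro x hx
    rw [Set.mem_iUnion₂] at hx
    obtain ⟨a, ha, hxa⟩ := hx
    exact Set.mem_biUnion (Finset.mem_coe.mpr ha) (Set.smul_set_mono interior_subset hxa)
  have hcardι : #ι = c0 := by
    rw [hι, Cardinal.mk_finset_of_infinite, hA₀card]
  -- well order of minimal type and transfinite choice of block base points
  obtain ⟨r, wo, hr⟩ := Cardinal.ord_eq ι
  haveI := wo
  have hpred : ∀ S : ι, #{T : ι // r T S} < c0 := by
    intro S
    rw [← Ordinal.card_typein, ← hcardι]
    exact Cardinal.card_typein_lt (r := r) S hr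
  have hstep : ∀ (S : ι) (prev : ∀ T : ι, r T S → G), ∃ g : G,
      g ∉ KS S ∧ ∀ (T : ι) (hT : r T S),
        g ∉ (fun p : G × G => p.1⁻¹ * (p.2 * prev T hT)) ''
          ((CCf (KS S)) ×ˢ (CCf (KS T))) := by
    intro S prev
    set 𝒞 : Set (Set G) := insert (KS S)
      (Set.range fun T : {T : ι // r T S} =>
        (fun p : G × G => p.1⁻¹ * (p.2 * prev T.1 T.2)) ''
          ((CCf (KS S)) ×ˢ (CCf (KS T.1)))) with h𝒞
    have hc : #𝒞 < c0 := by
      calc #𝒞 ≤ _ + 1 := Cardinal.mk_insert_le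
        _ ≤ #{T : ι // r T S} + 1 := by
            gcongr
            exact Cardinal.mk_range_le
        _ < c0 := Cardinal.add_lt_of_lt hℵ0 (hpred S)
            (lt_of_lt_of_le Cardinal.one_lt_aleph0 hℵ0)
    have hcpt : ∀ C ∈ 𝒞, IsCompact C := by
      rintro C (rfl | ⟨T, rfl⟩)
      · exact hKSc S
      · exact (((hCCf _ (hKSc S)).prod (hCCf _ (hKSc T.1))).image
          (by fun_prop))
    obtain ⟨g, hg⟩ := havoid 𝒞 hc hcpt
    exact ⟨g, hg _ (Set.mem_insert _ _),
      fun T hT => hg _ (Set.mem_insert_of_mem _ ⟨⟨T, hT⟩, rfl⟩)⟩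
    -- done
  choose step hstep1 hstep2 using hstep
  set b : ι → G := (IsWellFounded.wf (r := r)).fix (fun S rec => step S rec) with hb
  have hfix : ∀ S, b S = step S (fun T _ => b T) := fun S =>
    WellFounded.fix_eq _ _ _
  have hb1 : ∀ S, b S ∉ KS S := by
    intro S
    rw [hfix S]
    exact hstep1 S _
  have hb2 : ∀ (S T : ι) (hT : r T S),
      b S ∉ (fun p : G × G => p.1⁻¹ * (p.2 * b T)) ''
        ((CCf (KS S)) ×ˢ (CCf (KS T))) := by
    intro S T hT
    rw [hfix S]
    exact hstep2 S (fun T _ => b T) T hT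
  have hdisj : ∀ S T : ι, S ≠ T →
      Disjoint (CCf (KS S) * {b S}) (CCf (KS T) * {b T}) := by
    have main : ∀ S T : ι, r T S →
        Disjoint (CCf (KS S) * {b S}) (CCf (KS T) * {b T}) := by
      intro S T hT
      rw [Set.disjoint_left]
      rintro z hzS hzT
      rw [Set.mem_mul] at hzS hzT
      obtain ⟨c₁, hc₁, y₁, hy₁, hz₁⟩ := hzS
      obtain ⟨c₂, hc₂, y₂, hy₂, hz₂⟩ := hzT
      rw [Set.mem_singleton_iff] at hy₁ hy₂
      subst hy₁; subst hy₂
      apply hb2 S T hT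
      refine ⟨(c₁, c₂), ⟨hc₁, hc₂⟩, ?_⟩
      show c₁⁻¹ * (c₂ * b T) = b S
      rw [← hz₁.trans hz₂.symm]
      exact inv_mul_cancel_left c₁ (b S)
    intro S T hST
    rcases trichotomous_of r S T with h | h | h
    · exact (main T S h).symm
    · exact absurd h hST
    · exact main S T h
  refine ⟨⟨ι, KS, b, Filter.atTop, Filter.atTop_neBot, hKSc, ?_, hKScov, hb1, hdisj⟩⟩
  intro S₀
  apply Filter.mem_of_superset (Filter.mem_atTop S₀)
  intro S hS
  exact hKSmono S₀ S hS

end Blocks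

section Statement19Aux2

open Set Filter
open scoped Pointwise

variable {G : Type*} [Group G] [TopologicalSpace G] [IsTopologicalGroup G]

/-- Uniform left-translation continuity of compactly supported continuous functions. -/
lemma unif_small [T2Space G] [LocallyCompactSpace G] {ψ : G → ℝ} (hψc : Continuous ψ)
    (hψs : HasCompactSupport ψ) {ε : ℝ} (hε : 0 < ε) :
    ∀ᶠ s in 𝓝 (1 : G), ∀ x, |ψ (s * x) - ψ x| ≤ ε := by
  obtain ⟨V₁, hV₁c, hV₁⟩ := exists_compact_mem_nhds (1 : G)
  set K := tsupport ψ with hK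
  have hKc : IsCompact K := hψs
  set C : Set G := V₁⁻¹ * K ∪ K with hC
  have hCc : IsCompact C := (hV₁c.inv.mul hKc).union hKc
  set Φ : G × G → ℝ := fun q => ψ (q.1 * q.2) - ψ q.2 with hΦ
  have hΦc : Continuous Φ := by
    apply Continuous.sub
    · exact hψc.comp (continuous_fst.mul continuous_snd)
    · exact hψc.comp continuous_snd
  have hsub : ({1} : Set G) ×ˢ C ⊆ Φ ⁻¹' (Metric.ball 0 ε) := by
    rintro ⟨s, x⟩ ⟨hs, hx⟩
    rw [Set.mem_singleton_iff] at hs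
    subst hs
    simp only [Set.mem_preimage, Metric.mem_ball, Real.dist_eq, hΦ, one_mul, sub_self,
      sub_zero, abs_zero]
    exact hε
  obtain ⟨u, v, hu, _hv, h1u, hCv, huv⟩ := generalized_tube_lemma isCompact_singleton hCc
      (hΦc.isOpen_preimage _ Metric.isOpen_ball) hsub
  filter_upwards [hu.mem_nhds (h1u rfl), hV₁] with s hsu hsV₁
  intro x
  by_cases hx : x ∈ C
  · have hmem := huv (Set.mk_mem_prod hsu (hCv hx))
    simp only [Set.mem_preimage, Metric.mem_ball, Real.dist_eq, sub_zero, hΦ] at hmem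
    exact le_of_lt hmem
  · have hx1 : ψ x = 0 := image_eq_zero_of_notMem_tsupport fun hmem => hx (Or.inr hmem)
    have hx2 : ψ (s * x) = 0 := by
      apply image_eq_zero_of_notMem_tsupport
      intro hmem
      apply hx
      left
      have hs' : s⁻¹ ∈ V₁⁻¹ := Set.inv_mem_inv.mpr hsV₁
      have := Set.mul_mem_mul hs' hmem
      rwa [inv_mul_cancel_left] at this
    simp [hx1, hx2, le_of_lt hε]

variable [T2Space G] [LocallyCompactSpace G]

/-- Key factorization: on a noncompact group, every `f ∈ LUC(G)` factors exactly as
`f = p · h` with `p ∈ C₀(G)^⊥`. -/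
theorem exists_factorization (hnc : ¬ CompactSpace G) (f : LUC G) :
    ∃ p : Ld G, p ∈ C0perp G ∧ ∃ h : LUC G, arensFn p h = f := by
  classical
  -- a compact symmetric neighborhood of the identity
  obtain ⟨K₀, hK₀c, hK₀⟩ := exists_compact_mem_nhds (1 : G)
  set V : Set G := K₀ ∩ K₀⁻¹ with hVdef
  have hK₀inv : K₀⁻¹ ∈ 𝓝 (1 : G) := by
    have hpre : (fun x : G => x⁻¹) ⁻¹' K₀ = K₀⁻¹ := Set.inv_preimage
    rw [← hpre]
    apply (continuous_inv.continuousAt (x := (1 : G))).preimage_mem_nhds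
    rwa [inv_one]
  have hVc : IsCompact V := hK₀c.inter_right hK₀c.inv.isClosed
  have hV1 : V ∈ 𝓝 (1 : G) := Filter.inter_mem hK₀ hK₀inv
  have hV1mem : (1 : G) ∈ V := mem_of_mem_nhds hV1
  -- the bump function
  obtain ⟨ψ, hψ1, hψ0, hψs, hψrange⟩ := exists_continuous_one_zero_of_isCompact
    (isCompact_singleton : IsCompact ({1} : Set G)) (isOpen_interior (s := V)).isClosed_compl
    (by
      rw [Set.disjoint_compl_right_iff_subset, Set.singleton_subset_iff]
      exact mem_interior_iff_mem_nhds.mpr hV1)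
  -- moduli of continuity
  have hfmod : ∀ ε : ℝ, 0 < ε → ∀ᶠ s in 𝓝 (1 : G), ∀ x : G,
      ‖(f : G →ᵇ ℂ) (s * x) - (f : G →ᵇ ℂ) x‖ ≤ ε := by
    intro ε hε
    have hcont : Continuous fun g : G => lTrans g (f : G →ᵇ ℂ) := f.2
    have h1 : Tendsto (fun g : G => lTrans g (f : G →ᵇ ℂ)) (𝓝 1)
        (𝓝 (lTrans 1 (f : G →ᵇ ℂ))) := hcont.continuousAt
    have h2 : lTrans 1 (f : G →ᵇ ℂ) = (f : G →ᵇ ℂ) := by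
      ext x; simp [lTrans_apply]
    rw [h2] at h1
    have h3 := Metric.tendsto_nhds.mp h1 ε hε
    filter_upwards [h3] with s hs x
    have hnorm : ‖lTrans s (f : G →ᵇ ℂ) - (f : G →ᵇ ℂ)‖ ≤ ε := by
      rw [← dist_eq_norm]; exact le_of_lt hs
    calc ‖(f : G →ᵇ ℂ) (s * x) - (f : G →ᵇ ℂ) x‖
        = ‖(lTrans s (f : G →ᵇ ℂ) - (f : G →ᵇ ℂ)) x‖ := by
          simp [lTrans_apply]
      _ ≤ ‖lTrans s (f : G →ᵇ ℂ) - (f : G →ᵇ ℂ)‖ :=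
          BoundedContinuousFunction.norm_coe_le_norm _ x
      _ ≤ ε := hnorm
  -- blocks
  set CCf : Set G → Set G := fun K => V * (V * (V * (V * K))) with hCCfdef
  have hCCfc : ∀ K : Set G, IsCompact K → IsCompact (CCf K) := fun K hK =>
    hVc.mul (hVc.mul (hVc.mul (hVc.mul hK)))
  obtain ⟨D⟩ := exists_blockData hnc hVc hV1 CCf hCCfc
  set ι := D.ι with hιdef
  set KS := D.KS with hKSdef
  set b := D.b with hbdef
  -- cutoffs
  set φ : ι → G → ℝ := fun S g => sSup ((fun k => ψ (g * k⁻¹)) '' KS S) with hφdef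
  have hφbdd : ∀ S g, BddAbove ((fun k => ψ (g * k⁻¹)) '' KS S) := by
    intro S g
    refine ⟨1, ?_⟩
    rintro y ⟨k, _hk, rfl⟩
    exact (hψrange _).2
  have hφ01 : ∀ S g, 0 ≤ φ S g ∧ φ S g ≤ 1 := by
    intro S g
    constructor
    · apply Real.sSup_nonneg
      rintro y ⟨k, _hk, rfl⟩
      exact (hψrange _).1
    · apply Real.sSup_le _ zero_le_one
      rintro y ⟨k, _hk, rfl⟩
      exact (hψrange _).2
  have hφone : ∀ S g, g ∈ KS S → φ S g = 1 := by
    intro S g hg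
    refine le_antisymm (hφ01 S g).2 ?_
    have hmem : (1 : ℝ) ∈ (fun k => ψ (g * k⁻¹)) '' KS S := by
      refine ⟨g, hg, ?_⟩
      show ψ (g * g⁻¹) = 1
      rw [mul_inv_cancel]
      simpa using hψ1 rfl
    exact le_csSup (hφbdd S g) hmem
  have hφsupp : ∀ S g, φ S g ≠ 0 → g ∈ V * KS S := by
    intro S g hne
    by_contra hgout
    apply hne
    have hz : ∀ y ∈ (fun k => ψ (g * k⁻¹)) '' KS S, y ≤ 0 := by
      rintro y ⟨k, hk, rfl⟩
      show ψ (g * k⁻¹) ≤ 0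
      have h0 : ψ (g * k⁻¹) = 0 := by
        apply hψ0
        rw [Set.mem_compl_iff]
        intro hmem
        apply hgout
        have hv : g * k⁻¹ ∈ V := interior_subset hmem
        have := Set.mul_mem_mul hv hk
        rwa [inv_mul_cancel_right] at this
      rw [h0]
    exact le_antisymm (Real.sSup_le hz le_rfl) (hφ01 S g).1
  have hφmod : ∀ (s : G) (ε : ℝ), 0 ≤ ε → (∀ x, |ψ (s * x) - ψ x| ≤ ε) →
      ∀ S g, |φ S (s * g) - φ S g| ≤ ε := by
    intro s ε hε hs S g
    rw [abs_sub_le_iff]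
    constructor
    · rw [sub_le_iff_le_add, add_comm]
      apply Real.sSup_le _ (add_nonneg (hφ01 S g).1 hε)
      rintro y ⟨k, hk, rfl⟩
      show ψ (s * g * k⁻¹) ≤ φ S g + ε
      have h2 : ψ (s * g * k⁻¹) - ψ (g * k⁻¹) ≤ ε := by
        have habs := hs (g * k⁻¹)
        rw [abs_sub_le_iff] at habs
        have := habs.1
        rwa [← mul_assoc] at this
      have h3 : ψ (g * k⁻¹) ≤ φ S g := le_csSup (hφbdd S g) ⟨k, hk, rfl⟩
      linarith
    · rw [sub_le_iff_le_add, add_comm]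
      apply Real.sSup_le _ (add_nonneg (hφ01 S (s * g)).1 hε)
      rintro y ⟨k, hk, rfl⟩
      show ψ (g * k⁻¹) ≤ φ S (s * g) + ε
      have h2 : ψ (g * k⁻¹) - ψ (s * g * k⁻¹) ≤ ε := by
        have habs := hs (g * k⁻¹)
        rw [abs_sub_le_iff] at habs
        have := habs.2
        rwa [← mul_assoc] at this
      have h3 : ψ (s * g * k⁻¹) ≤ φ S (s * g) :=
        le_csSup (hφbdd S (s * g)) ⟨k, hk, rfl⟩
      linarith
  -- the localized pieces of `f`
  set F : ι → G → ℂ := fun S g => (φ S g : ℂ) * (f : G →ᵇ ℂ) g with hFdef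
  have hFsupp : ∀ S g, F S g ≠ 0 → g ∈ V * KS S := by
    intro S g hne
    apply hφsupp S g
    intro h0
    apply hne
    simp [hFdef, h0]
  have hFeq : ∀ S g, g ∈ KS S → F S g = (f : G →ᵇ ℂ) g := by
    intro S g hg
    simp [hFdef, hφone S g hg]
  have hFbdd : ∀ S g, ‖F S g‖ ≤ ‖(f : G →ᵇ ℂ)‖ := by
    intro S g
    calc ‖F S g‖ = |φ S g| * ‖(f : G →ᵇ ℂ) g‖ := by
          rw [hFdef]; rw [norm_mul, Complex.norm_real, Real.norm_eq_abs]
      _ ≤ 1 * ‖(f : G →ᵇ ℂ)‖ := by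
          apply mul_le_mul
          · rw [abs_of_nonneg (hφ01 S g).1]; exact (hφ01 S g).2
          · exact BoundedContinuousFunction.norm_coe_le_norm _ g
          · exact norm_nonneg _
          · exact zero_le_one
      _ = ‖(f : G →ᵇ ℂ)‖ := one_mul _
  have hFmod : ∀ (s : G) (ε₁ ε₂ : ℝ), 0 ≤ ε₁ → 0 ≤ ε₂ →
      (∀ x, |ψ (s * x) - ψ x| ≤ ε₁) →
      (∀ x, ‖(f : G →ᵇ ℂ) (s * x) - (f : G →ᵇ ℂ) x‖ ≤ ε₂) →
      ∀ S z, ‖F S (s * z) - F S z‖ ≤ ‖(f : G →ᵇ ℂ)‖ * ε₁ + ε₂ := by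
    intro s ε₁ ε₂ hε₁ hε₂ hψm hfm S z
    have hdecomp : F S (s * z) - F S z
        = ((φ S (s * z) : ℂ) - (φ S z : ℂ)) * (f : G →ᵇ ℂ) (s * z)
          + (φ S z : ℂ) * ((f : G →ᵇ ℂ) (s * z) - (f : G →ᵇ ℂ) z) := by
      rw [hFdef]; ring
    rw [hdecomp]
    have e1 : ‖((φ S (s * z) : ℂ) - (φ S z : ℂ)) * (f : G →ᵇ ℂ) (s * z)‖
        ≤ ε₁ * ‖(f : G →ᵇ ℂ)‖ := by
      rw [norm_mul]
      apply mul_le_mul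
      · rw [show ((φ S (s * z) : ℂ) - (φ S z : ℂ)) = ((φ S (s * z) - φ S z : ℝ) : ℂ) by
          push_cast; ring]
        rw [Complex.norm_real, Real.norm_eq_abs]
        exact hφmod s ε₁ hε₁ hψm S z
      · exact BoundedContinuousFunction.norm_coe_le_norm _ _
      · exact norm_nonneg _
      · exact hε₁
    have e2 : ‖(φ S z : ℂ) * ((f : G →ᵇ ℂ) (s * z) - (f : G →ᵇ ℂ) z)‖ ≤ 1 * ε₂ := by
      rw [norm_mul]
      apply mul_le_mul
      · rw [Complex.norm_real, Real.norm_eq_abs, abs_of_nonneg (hφ01 S z).1]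
        exact (hφ01 S z).2
      · exact hfm z
      · exact norm_nonneg _
      · exact zero_le_one
    calc ‖_ + _‖ ≤ _ := norm_add_le _ _
      _ ≤ ε₁ * ‖(f : G →ᵇ ℂ)‖ + 1 * ε₂ := add_le_add e1 e2
      _ = ‖(f : G →ᵇ ℂ)‖ * ε₁ + ε₂ := by ring
  -- block geometry
  have hsubV : ∀ A : Set G, A ⊆ V * A := by
    intro A x hx
    have := Set.mul_mem_mul hV1mem hx
    rwa [one_mul] at this
  set W3 : ι → Set G := fun S => V * (V * (V * KS S)) with hW3def
  have hW3CC : ∀ S, W3 S ⊆ CCf (KS S) := fun S => hsubV _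
  have hKW3 : ∀ S, V * KS S ⊆ W3 S := by
    intro S
    refine (Set.mul_subset_mul_left (hsubV (KS S))).trans ?_
    exact Set.mul_subset_mul_left (Set.mul_subset_mul_left (hsubV (KS S)))
  have hKSW3 : ∀ S, KS S ⊆ W3 S := fun S => (hsubV _).trans (hKW3 S)
  have huniq : ∀ (y : G) (S T : ι), y * (b S)⁻¹ ∈ CCf (KS S) → y * (b T)⁻¹ ∈ CCf (KS T) →
      S = T := by
    intro y S T hS hT
    by_contra hne
    have h1 : y ∈ CCf (KS S) * {b S} := by
      have := Set.mul_mem_mul hS (Set.mem_singleton (b S))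
      rwa [inv_mul_cancel_right] at this
    have h2 : y ∈ CCf (KS T) * {b T} := by
      have := Set.mul_mem_mul hT (Set.mem_singleton (b T))
      rwa [inv_mul_cancel_right] at this
    exact Set.disjoint_left.mp (D.disj S T hne) h1 h2
  -- the glued function
  set h : G → ℂ := fun y =>
    if hy : ∃ S, y * (b S)⁻¹ ∈ W3 S then F hy.choose (y * (b hy.choose)⁻¹) else 0 with hhdef
  have h_eq : ∀ (y : G) (S : ι), y * (b S)⁻¹ ∈ W3 S → h y = F S (y * (b S)⁻¹) := by
    intro y S hyS
    have hy : ∃ S, y * (b S)⁻¹ ∈ W3 S := ⟨S, hyS⟩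
    rw [hhdef]
    simp only [dif_pos hy]
    have hchoose : hy.choose = S :=
      huniq y _ S (hW3CC _ hy.choose_spec) (hW3CC _ hyS)
    rw [hchoose]
  have h_zero : ∀ y : G, (∀ S, y * (b S)⁻¹ ∉ W3 S) → h y = 0 := by
    intro y hy
    rw [hhdef]
    simp only
    rw [dif_neg]
    rintro ⟨S, hS⟩
    exact hy S hS
  -- the central uniform estimate
  have hmain : ∀ s ∈ V, ∀ ε₁ ε₂ : ℝ, 0 ≤ ε₁ → 0 ≤ ε₂ →
      (∀ x, |ψ (s * x) - ψ x| ≤ ε₁) →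
      (∀ x, ‖(f : G →ᵇ ℂ) (s * x) - (f : G →ᵇ ℂ) x‖ ≤ ε₂) →
      ∀ y, ‖h (s * y) - h y‖ ≤ ‖(f : G →ᵇ ℂ)‖ * ε₁ + ε₂ := by
    intro s hsV ε₁ ε₂ hε₁ hε₂ hψm hfm y
    have hbound := hFmod s ε₁ ε₂ hε₁ hε₂ hψm hfm
    have hRHS : (0 : ℝ) ≤ ‖(f : G →ᵇ ℂ)‖ * ε₁ + ε₂ := by positivity
    by_cases hy : ∃ S, y * (b S)⁻¹ ∈ W3 S
    · obtain ⟨S, hyS⟩ := hy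
      have hyz : h y = F S (y * (b S)⁻¹) := h_eq y S hyS
      have hsz : (s * y) * (b S)⁻¹ = s * (y * (b S)⁻¹) := by rw [mul_assoc]
      by_cases hsy : (s * y) * (b S)⁻¹ ∈ W3 S
      · have hsyz : h (s * y) = F S (s * (y * (b S)⁻¹)) := by
          rw [← hsz]; exact h_eq _ S hsy
        rw [hsyz, hyz]
        exact hbound S _
      · have hnone : ∀ T, (s * y) * (b T)⁻¹ ∉ W3 T := by
          intro T hT
          have hTS : T = S := by
            apply huniq (s * y) T S (hW3CC _ hT)
            rw [hsz]
            exact Set.mul_mem_mul hsV hyS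
          exact hsy (hTS ▸ hT)
        have h0 : h (s * y) = 0 := h_zero _ hnone
        have hF0 : F S (s * (y * (b S)⁻¹)) = 0 := by
          by_contra hne
          apply hsy
          rw [hsz]
          exact hKW3 S (hFsupp S _ hne)
        rw [h0, hyz, show (0 : ℂ) = F S (s * (y * (b S)⁻¹)) from hF0.symm]
        exact hbound S _
    · push_neg at hy
      have h0 : h y = 0 := h_zero _ hy
      by_cases hsy : ∃ T, (s * y) * (b T)⁻¹ ∈ W3 T
      · obtain ⟨T, hT⟩ := hsy
        have hsw : (s * y) * (b T)⁻¹ = s * (y * (b T)⁻¹) := by rw [mul_assoc]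
        have hhsy : h (s * y) = F T (s * (y * (b T)⁻¹)) := by
          rw [← hsw]; exact h_eq _ T hT
        have hFw : F T (y * (b T)⁻¹) = 0 := by
          by_contra hne
          exact hy T (hKW3 T (hFsupp T _ hne))
        rw [hhsy, h0, show (0 : ℂ) = F T (y * (b T)⁻¹) from hFw.symm]
        exact hbound T _
      · push_neg at hsy
        rw [h_zero _ hsy, h0, sub_zero, norm_zero]
        exact hRHS
  -- eventual bound near the identity
  have hEv : ∀ ε : ℝ, 0 < ε → ∀ᶠ s in 𝓝 (1 : G), ∀ y, ‖h (s * y) - h y‖ ≤ ε := by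
    intro ε hε
    set M := ‖(f : G →ᵇ ℂ)‖ with hM
    have hM0 : 0 ≤ M := norm_nonneg _
    have hε₁ : 0 < ε / (2 * (M + 1)) := by positivity
    have hε₂ : 0 < ε / 2 := by positivity
    filter_upwards [hV1, unif_small ψ.continuous hψs hε₁, hfmod _ hε₂] with s hsV hsψ hsf y
    calc ‖h (s * y) - h y‖ ≤ M * (ε / (2 * (M + 1))) + ε / 2 :=
          hmain s hsV _ _ (le_of_lt hε₁) (le_of_lt hε₂) hsψ hsf y
      _ ≤ ε / 2 + ε / 2 := by
          have h1 : M * (ε / (2 * (M + 1))) ≤ (M + 1) * (ε / (2 * (M + 1))) := by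
            apply mul_le_mul_of_nonneg_right (by linarith) (le_of_lt hε₁)
          have h2 : (M + 1) * (ε / (2 * (M + 1))) = ε / 2 := by
            field_simp
          linarith
      _ = ε := by ring
  -- continuity and boundedness of h
  have hcont : Continuous h := by
    rw [continuous_iff_continuousAt]
    intro y₀
    rw [ContinuousAt, Metric.tendsto_nhds]
    intro ε hε
    have hhalf : 0 < ε / 2 := by positivity
    have hmap : Tendsto (fun y : G => y * y₀⁻¹) (𝓝 y₀) (𝓝 (1 : G)) := by
      have hcm : Continuous fun y : G => y * y₀⁻¹ := continuous_mul_right y₀⁻¹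
      have h1 := hcm.continuousAt (x := y₀)
      rwa [ContinuousAt, mul_inv_cancel] at h1
    filter_upwards [hmap.eventually (hEv (ε / 2) hhalf)] with y hy
    have hyy : (y * y₀⁻¹) * y₀ = y := inv_mul_cancel_right y y₀
    rw [dist_eq_norm]
    calc ‖h y - h y₀‖ = ‖h ((y * y₀⁻¹) * y₀) - h y₀‖ := by rw [hyy]
      _ ≤ ε / 2 := hy y₀
      _ < ε := by linarith
  have hbdd : ∀ y, ‖h y‖ ≤ ‖(f : G →ᵇ ℂ)‖ := by
    intro y
    by_cases hy : ∃ S, y * (b S)⁻¹ ∈ W3 S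
    · obtain ⟨S, hyS⟩ := hy
      rw [h_eq y S hyS]
      exact hFbdd S _
    · push_neg at hy
      rw [h_zero _ hy, norm_zero]
      exact norm_nonneg _
  set hB : G →ᵇ ℂ :=
    BoundedContinuousFunction.ofNormedAddCommGroup h hcont _ hbdd with hhBdef
  have hBapp : ∀ y, hB y = h y := fun y => rfl
  have hlucB : Continuous fun g : G => lTrans g hB := by
    rw [continuous_iff_continuousAt]
    intro g₀
    rw [ContinuousAt, Metric.tendsto_nhds]
    intro ε hε
    have hhalf : 0 < ε / 2 := by positivity
    have hmap : Tendsto (fun g : G => g * g₀⁻¹) (𝓝 g₀) (𝓝 (1 : G)) := by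
      have hcm : Continuous fun g : G => g * g₀⁻¹ := continuous_mul_right g₀⁻¹
      have h1 := hcm.continuousAt (x := g₀)
      rwa [ContinuousAt, mul_inv_cancel] at h1
    filter_upwards [hmap.eventually (hEv (ε / 2) hhalf)] with g hg
    rw [dist_eq_norm]
    have hle : ‖lTrans g hB - lTrans g₀ hB‖ ≤ ε / 2 := by
      rw [BoundedContinuousFunction.norm_le (le_of_lt hhalf)]
      intro x
      have happ : (lTrans g hB - lTrans g₀ hB) x = h (g * x) - h (g₀ * x) := by
        simp [lTrans_apply, hBapp]
      rw [happ]
      have hgx : g * x = (g * g₀⁻¹) * (g₀ * x) := by group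
      rw [hgx]
      exact hg (g₀ * x)
    linarith
  set hL : LUC G := ⟨hB, hlucB⟩ with hhLdef
  -- values on blocks
  have hval : ∀ (g : G) (S : ι), g ∈ KS S → h (g * b S) = (f : G →ᵇ ℂ) g := by
    intro g S hg
    have hmem : (g * b S) * (b S)⁻¹ ∈ W3 S := by
      rw [mul_inv_cancel_right]
      exact hKSW3 S hg
    rw [h_eq _ S hmem, show (g * b S) * (b S)⁻¹ = g from mul_inv_cancel_right g (b S)]
    exact hFeq S g hg
  -- the ultrafilter limit functional
  haveI : D.L.NeBot := D.Lne
  set U : Ultrafilter ι := Ultrafilter.of D.L with hUdef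
  have hUL : (U : Filter ι) ≤ D.L := Ultrafilter.of_le _
  have htail : ∀ S₀ : ι, {S : ι | KS S₀ ⊆ KS S} ∈ (U : Filter ι) := fun S₀ =>
    hUL (D.tail S₀)
  have hex : ∀ v : LUC G, ∃ z : ℂ,
      Tendsto (fun S => (v : G →ᵇ ℂ) (b S)) (U : Filter ι) (𝓝 z) := by
    intro v
    have hmem : Metric.closedBall (0 : ℂ) ‖(v : G →ᵇ ℂ)‖ ∈
        Ultrafilter.map (fun S => (v : G →ᵇ ℂ) (b S)) U := by
      apply Filter.mem_map.mpr
      apply Filter.univ_mem'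
      intro S
      show (v : G →ᵇ ℂ) (b S) ∈ Metric.closedBall (0 : ℂ) ‖(v : G →ᵇ ℂ)‖
      rw [Metric.mem_closedBall, dist_zero_right]
      exact BoundedContinuousFunction.norm_coe_le_norm _ _
    obtain ⟨z, _hz, hle⟩ := (ProperSpace.isCompact_closedBall (0 : ℂ) _).ultrafilter_le_nhds
      (Ultrafilter.map (fun S => (v : G →ᵇ ℂ) (b S)) U) (Filter.le_principal_iff.mpr hmem)
    refine ⟨z, ?_⟩
    rwa [Ultrafilter.coe_map] at hle
  choose lim hlim using hex
  set p : Ld G := LinearMap.mkContinuous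
    { toFun := lim
      map_add' := by
        intro v w
        refine tendsto_nhds_unique (hlim (v + w)) ?_
        have hco : ∀ S : ι, ((v + w : LUC G) : G →ᵇ ℂ) (b S)
            = (v : G →ᵇ ℂ) (b S) + (w : G →ᵇ ℂ) (b S) := fun S => rfl
        exact ((hlim v).add (hlim w)).congr fun S => (hco S).symm
      map_smul' := by
        intro c v
        refine tendsto_nhds_unique (hlim (c • v)) ?_
        have hco : ∀ S : ι, ((c • v : LUC G) : G →ᵇ ℂ) (b S)
            = c • ((v : G →ᵇ ℂ) (b S)) := fun S => rfl
        simp only [RingHom.id_apply]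
        exact ((hlim v).const_smul c).congr fun S => (hco S).symm }
    1 (fun v => by
      have hle : ‖lim v‖ ≤ ‖(v : G →ᵇ ℂ)‖ := by
        have hn : Tendsto (fun S => ‖(v : G →ᵇ ℂ) (b S)‖) (U : Filter ι) (𝓝 ‖lim v‖) :=
          (hlim v).norm
        exact le_of_tendsto hn (Filter.Eventually.of_forall fun S =>
          BoundedContinuousFunction.norm_coe_le_norm _ _)
      rw [one_mul]; exact hle) with hpdef
  have hp_app : ∀ v : LUC G, p v = lim v := fun v => rfl
  have hpC0 : p ∈ C0perp G := by
    intro v hv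
    have hv' : Tendsto ((v : G →ᵇ ℂ) : G → ℂ) (cocompact G) (𝓝 0) := hv
    have h0 : Tendsto (fun S => (v : G →ᵇ ℂ) (b S)) (U : Filter ι) (𝓝 0) := by
      rw [Metric.tendsto_nhds]
      intro ε hε
      have hvc := Metric.tendsto_nhds.mp hv' ε hε
      rw [Filter.eventually_iff, Filter.mem_cocompact] at hvc
      obtain ⟨K, hKc, hKsub⟩ := hvc
      obtain ⟨S₀, hS₀⟩ := D.cov K hKc
      apply Filter.mem_of_superset (htail S₀)
      intro S hS
      simp only [Set.mem_setOf_eq] at hS ⊢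
      apply hKsub
      rw [Set.mem_compl_iff]
      intro hmem
      exact D.esc S (hS (hS₀ hmem))
    rw [hp_app v]
    exact tendsto_nhds_unique (hlim v) h0
  have hfact : arensFn p hL = f := by
    apply Subtype.ext
    ext g
    show p (lTransL g hL) = (f : G →ᵇ ℂ) g
    rw [hp_app]
    refine tendsto_nhds_unique (hlim (lTransL g hL)) ?_
    have hco : ∀ S : ι, ((lTransL g hL : LUC G) : G →ᵇ ℂ) (b S) = h (g * b S) :=
      fun S => rfl
    obtain ⟨S₀, hS₀⟩ := D.cov {g} isCompact_singleton
    have hevent : ∀ᶠ S in (U : Filter ι), ((lTransL g hL : LUC G) : G →ᵇ ℂ) (b S)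
        = (f : G →ᵇ ℂ) g := by
      apply Filter.mem_of_superset (htail S₀)
      intro S hS
      simp only [Set.mem_setOf_eq] at hS ⊢
      show ((lTransL g hL : LUC G) : G →ᵇ ℂ) (b S) = (f : G →ᵇ ℂ) g
      rw [hco S]
      exact hval g S (hS (hS₀ rfl))
    exact Tendsto.congr' (hevent.mono fun S hS => hS.symm) tendsto_const_nhds
  exact ⟨p, hpC0, hL, hfact⟩

end Statement19Aux2

end LucPaper

open LucPaper Filter Topology
open scoped BoundedContinuousFunction

/-- For an isometric algebra isomorphism `T : C_0(G)^⊥ → C_0(H)^⊥` (not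
necessarily weak-star continuous), each right-point multiplier `R_x(m) = T⁻¹(T(m)·δ_x)` is
weak-star continuous. -/
theorem right_point_multiplier_wstar_continuous
    {G : Type*} [Group G] [TopologicalSpace G] [IsTopologicalGroup G]
    [T2Space G] [LocallyCompactSpace G]
    {H : Type*} [Group H] [TopologicalSpace H] [IsTopologicalGroup H]
    [T2Space H] [LocallyCompactSpace H]
    (T : C0perp G ≃ₗ[ℂ] C0perp H)
    (hmul : ∀ m n : C0perp G, T (m * n) = T m * T n)
    (hiso : ∀ m : C0perp G, ‖T m‖ = ‖m‖) (x : H) :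
    WStarContinuousC0 (G := G) (H := G) (fun m : C0perp G =>
      T.symm ⟨arens (T m).1 (evalChar x), arens_evalChar_mem_C0perp (T m).2 x⟩) := by
  classical
  intro l m hconv f
  by_cases hcpt : CompactSpace G
  · -- compact case: `C0perp G` is trivial, so the map is constant
    have hzero : ∀ n : C0perp G, n = m := fun n =>
      Subtype.ext ((C0perp_eq_zero_of_compact (n : Ld G) n.2).trans
        (C0perp_eq_zero_of_compact (m : Ld G) m.2).symm)
    have heq : (fun n : C0perp G =>
        ((T.symm ⟨arens (T n).1 (evalChar x), arens_evalChar_mem_C0perp (T n).2 x⟩ :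
          C0perp G) : Ld G) f)
        = fun _ : C0perp G =>
        ((T.symm ⟨arens (T m).1 (evalChar x), arens_evalChar_mem_C0perp (T m).2 x⟩ :
          C0perp G) : Ld G) f := by
      funext n; rw [hzero n]
    rw [heq]
    exact tendsto_const_nhds
  · obtain ⟨p, hp, hh, hfact⟩ := exists_factorization hcpt f
    let P : C0perp G := ⟨p, hp⟩
    let c' : C0perp G :=
      T.symm ⟨arens (evalChar x) (T P).1, arens_mem_C0perp_left _ (T P).2⟩
    have key : ∀ n : C0perp G,
        ((T.symm ⟨arens (T n).1 (evalChar x), arens_evalChar_mem_C0perp (T n).2 x⟩ :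
          C0perp G) : Ld G) f
          = (n : Ld G) (arensFn (c' : Ld G) hh) := by
      intro n
      set Rn : C0perp G :=
        T.symm ⟨arens (T n).1 (evalChar x), arens_evalChar_mem_C0perp (T n).2 x⟩ with hRn
      have hTRn : T Rn = ⟨arens (T n).1 (evalChar x), arens_evalChar_mem_C0perp (T n).2 x⟩ :=
        T.apply_symm_apply _
      have hTc' : T c' = ⟨arens (evalChar x) (T P).1, arens_mem_C0perp_left _ (T P).2⟩ :=
        T.apply_symm_apply _
      have hmulT : Rn * P = n * c' := by
        apply T.injective
        rw [hmul, hmul]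
        apply Subtype.ext
        rw [C0perp_mul_coe, C0perp_mul_coe, hTRn, hTc']
        show arens (arens ((T n : C0perp H) : Ld H) (evalChar x)) ((T P : C0perp H) : Ld H)
          = arens ((T n : C0perp H) : Ld H) (arens (evalChar x) ((T P : C0perp H) : Ld H))
        exact arens_assoc _ _ _
      calc (Rn : Ld G) f = (Rn : Ld G) (arensFn p hh) := by rw [hfact]
        _ = arens (Rn : Ld G) p hh := (arens_apply _ _ _).symm
        _ = ((Rn * P : C0perp G) : Ld G) hh := rfl
        _ = ((n * c' : C0perp G) : Ld G) hh := by rw [hmulT]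
        _ = (n : Ld G) (arensFn (c' : Ld G) hh) := by rw [C0perp_mul_coe, arens_apply]
    have hfun : (fun n : C0perp G =>
        ((T.symm ⟨arens (T n).1 (evalChar x), arens_evalChar_mem_C0perp (T n).2 x⟩ :
          C0perp G) : Ld G) f)
        = fun n : C0perp G => (n : Ld G) (arensFn (c' : Ld G) hh) := funext key
    rw [hfun, key m]
    exact hconv _
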